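/- Let B_1, …, B_Q be dependences B_i(x) = A_i x + b_i from the tiled source space, assume t = d, T(τ) is nonempty, and each A_i(𝐧_j) has integer coordinates. Let FP(τ) = ⋃_{l} B_l⟨T(τ)⟩, V_i(τ) = {τ' ∈ ℤ^d : B_i⟨T(τ')⟩ ∩ FP(τ) ≠ ∅}, W_i(δ) = the orthogonal projection of Σ_j δ_j·𝐧_j onto the orthogonal complement of ker A_i, and for D ⊆ {1,…,Q} let F_D(τ) = (⋂_{i ∈ D} V_i(τ)) \ (⋃_{i ∉ D} V_i(τ)). Then for every D ⊆ {1, …, Q}, the set P_D(τ) = {W_i(τ' − τ) : τ' ∈ F_D(τ), i ∈ D} is finite. -/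

import Mathlib

open RealInnerProductSpace

/-- with `t = d`, a nonempty tile, integer coordinates for each
`A i (𝐧 j)`, `FP τ` the combined footprint, `V i τ` the consumer tiles of dependence
`i`, `W i δ` the projection of `∑ j, δ j • 𝐧 j` onto `(ker (A i))ᗮ`, and
`F D = (⋂ i ∈ D, V i) \ (⋃ i ∉ D, V i)`, each set
`P_D(τ) = {W i (τ' − τ) : τ' ∈ F D, i ∈ D}` is finite. -/
theorem projected_offsets_finite_per_family
    (d k Q : ℕ)
    (n : Fin d → EuclideanSpace ℝ (Fin d)) (hn : LinearIndependent ℝ n)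
    (s : Fin d → ℝ) (hs : ∀ j, 0 < s j)
    (N : Fin d → EuclideanSpace ℝ (Fin d))
    (hN : ∀ i j, ⟪N i, n j⟫ = if i = j then s j else 0)
    (A : Fin Q → (EuclideanSpace ℝ (Fin d) →ₗ[ℝ] EuclideanSpace ℝ (Fin k)))
    (b : Fin Q → EuclideanSpace ℝ (Fin k))
    (T : (Fin d → ℤ) → Set (EuclideanSpace ℝ (Fin d)))
    (hT : ∀ τ, T τ = {x | ∀ j, s j * (τ j : ℝ) ≤ ⟪x, n j⟫ ∧ ⟪x, n j⟫ < s j * ((τ j : ℝ) + 1)})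
    (τ : Fin d → ℤ) (hτ : (T τ).Nonempty)
    (hint : ∀ i j l, ∃ z : ℤ, A i (N j) l = (z : ℝ))
    (FP : (Fin d → ℤ) → Set (EuclideanSpace ℝ (Fin k)))
    (hFP : ∀ σ, FP σ = ⋃ l : Fin Q, (fun x => A l x + b l) '' T σ)
    (V : Fin Q → Set (Fin d → ℤ))
    (hV : ∀ i, V i = {τ' | ((fun x => A i x + b i) '' T τ' ∩ FP τ).Nonempty})
    (W : Fin Q → (Fin d → ℤ) → EuclideanSpace ℝ (Fin d))
    (hW : ∀ i δ, W i δ =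
      (Submodule.orthogonalProjectionOnto (LinearMap.ker (A i))ᗮ (∑ j, (δ j : ℝ) • N j) :
        EuclideanSpace ℝ (Fin d)))
    (F : Set (Fin Q) → Set (Fin d → ℤ))
    (hF : ∀ D, F D = (⋂ i ∈ D, V i) \ (⋃ i ∈ Dᶜ, V i)) :
    ∀ D : Set (Fin Q),
      {w : EuclideanSpace ℝ (Fin d) |
        ∃ τ' ∈ F D, ∃ i ∈ D, w = W i (τ' - τ)}.Finite := by
  intro D
  -- orthogonal to all n j implies zero
  have hzero : ∀ w : EuclideanSpace ℝ (Fin d), (∀ j, ⟪w, n j⟫ = 0) → w = 0 := by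
    intro w hw
    have hcard : Fintype.card (Fin d) = Module.finrank ℝ (EuclideanSpace ℝ (Fin d)) := by
      simp [finrank_euclideanSpace_fin]
    have hspan := hn.span_eq_top_of_card_eq_finrank' hcard
    apply ext_inner_left ℝ
    intro v
    have hv : v ∈ Submodule.span ℝ (Set.range n) := hspan ▸ Submodule.mem_top
    simp only [inner_zero_right]
    induction hv using Submodule.span_induction with
    | mem x hx => obtain ⟨j, rfl⟩ := hx; rw [real_inner_comm]; exact hw j
    | zero => simp
    | add x y _ _ hx hy => simp [inner_add_left, hx, hy]
    | smul c x _ hx => simp [inner_smul_left, hx]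
  -- inner products of linear combinations of N with n
  have hvn : ∀ (c : Fin d → ℝ) (m : Fin d), ⟪∑ j, c j • N j, n m⟫ = c m * s m := by
    intro c m
    rw [sum_inner]
    rw [Finset.sum_eq_single m]
    · rw [real_inner_smul_left, hN m m]; simp
    · intro j _ hj; rw [real_inner_smul_left, hN j m]; simp [hj]
    · simp
  -- every vector is a combination of the N j
  have hrep : ∀ z : EuclideanSpace ℝ (Fin d), z = ∑ j, (⟪z, n j⟫ / s j) • N j := by
    intro z
    have h := hzero (z - ∑ j, (⟪z, n j⟫ / s j) • N j) ?_
    · linear_combination (norm := abel) h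
    · intro m
      rw [inner_sub_left, hvn, div_mul_cancel₀ _ (hs m).ne', sub_self]
  -- bound on the tile T τ
  set R : ℝ := ∑ j, (max |s j * (τ j : ℝ)| |s j * ((τ j : ℝ) + 1)|) / s j * ‖N j‖ with hR
  have hRterm : ∀ j, (0:ℝ) ≤ (max |s j * (τ j : ℝ)| |s j * ((τ j : ℝ) + 1)|) / s j * ‖N j‖ := by
    intro j
    have := hs j
    positivity
  have hR0 : 0 ≤ R := Finset.sum_nonneg fun j _ => hRterm j
  have hTbound : ∀ z ∈ T τ, ‖z‖ ≤ R := by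
    intro z hz
    rw [hT] at hz
    calc ‖z‖ = ‖∑ j, (⟪z, n j⟫ / s j) • N j‖ := by rw [← hrep z]
      _ ≤ ∑ j, ‖(⟪z, n j⟫ / s j) • N j‖ := norm_sum_le _ _
      _ ≤ R := by
          apply Finset.sum_le_sum
          intro j _
          rw [norm_smul, norm_div, Real.norm_eq_abs, Real.norm_eq_abs,
            abs_of_pos (hs j)]
          gcongr
          · exact (hs j).le
          · obtain ⟨h1, h2⟩ := hz j
            rw [abs_le]
            constructor
            · calc -(max |s j * (τ j : ℝ)| |s j * ((τ j : ℝ) + 1)|) ≤ -|s j * (τ j : ℝ)| := by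
                    simp [neg_le_neg_iff, le_max_left]
                _ ≤ s j * (τ j : ℝ) := neg_abs_le _
                _ ≤ ⟪z, n j⟫ := h1
            · calc ⟪z, n j⟫ ≤ s j * ((τ j : ℝ) + 1) := le_of_lt h2
                _ ≤ |s j * ((τ j : ℝ) + 1)| := le_abs_self _
                _ ≤ _ := le_max_right _ _
  -- operator norm bounds for the linear maps
  have hbound : ∀ i : Fin Q, ∃ M : ℝ, 0 ≤ M ∧ ∀ x, ‖A i x‖ ≤ M * ‖x‖ := fun i =>
    ⟨‖LinearMap.toContinuousLinearMap (A i)‖, norm_nonneg _,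
      fun x => (LinearMap.toContinuousLinearMap (A i)).le_opNorm x⟩
  choose M hM0 hM using hbound
  -- per-dependence sets
  set S : Fin Q → Set (EuclideanSpace ℝ (Fin d)) :=
    fun i => {w | ∃ τ' ∈ V i, w = W i (τ' - τ)} with hS
  have hsub : {w : EuclideanSpace ℝ (Fin d) |
      ∃ τ' ∈ F D, ∃ i ∈ D, w = W i (τ' - τ)} ⊆ ⋃ i, S i := by
    rintro w ⟨τ', hτ', i, hi, rfl⟩
    rw [hF] at hτ'
    have hVi : τ' ∈ V i := by
      have := hτ'.1
      rw [Set.mem_iInter₂] at this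
      exact this i hi
    exact Set.mem_iUnion.mpr ⟨i, τ', hVi, rfl⟩
  apply Set.Finite.subset _ hsub
  apply Set.finite_iUnion
  intro i
  -- the bound constant for dependence i
  set C : ℝ := M i * R + ‖b i‖ + ∑ l, (M l * R + ‖b l‖) with hC
  -- key: A i applied to W i δ equals A i applied to the combination
  have hAW : ∀ δ : Fin d → ℤ, A i (W i δ) = A i (∑ j, (δ j : ℝ) • N j) := by
    intro δ
    set v := ∑ j, (δ j : ℝ) • N j with hv
    have h1 : v - W i δ ∈ ((LinearMap.ker (A i))ᗮ)ᗮ := by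
      rw [hW]
      exact Submodule.sub_starProjection_mem_orthogonal (K := (LinearMap.ker (A i))ᗮ) v
    rw [Submodule.orthogonal_orthogonal] at h1
    have h2 : A i (v - W i δ) = 0 := h1
    rw [map_sub] at h2
    exact (sub_eq_zero.mp h2).symm
  have hWmem : ∀ δ : Fin d → ℤ, W i δ ∈ (LinearMap.ker (A i))ᗮ := by
    intro δ; rw [hW]; exact SetLike.coe_mem _
  -- injectivity of A i on S i
  have hInj : Set.InjOn (A i) (S i) := by
    rintro w1 ⟨δ1, _, rfl⟩ w2 ⟨δ2, _, rfl⟩ h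
    have hm : W i (δ1 - τ) - W i (δ2 - τ) ∈ (LinearMap.ker (A i))ᗮ :=
      Submodule.sub_mem _ (hWmem _) (hWmem _)
    have hk : W i (δ1 - τ) - W i (δ2 - τ) ∈ LinearMap.ker (A i) := by
      rw [LinearMap.mem_ker, map_sub, h, sub_self]
    have h0 : W i (δ1 - τ) - W i (δ2 - τ) = 0 :=
      inner_self_eq_zero.mp (Submodule.inner_right_of_mem_orthogonal hk hm)
    exact sub_eq_zero.mp h0
  -- coordinatewise bound in Euclidean space
  have hcoord : ∀ (z : EuclideanSpace ℝ (Fin k)) (l : Fin k), |z l| ≤ ‖z‖ := by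
    intro z l
    rw [EuclideanSpace.norm_eq]
    rw [show |z l| = Real.sqrt (‖z l‖ ^ 2) by simp [Real.sqrt_sq_eq_abs]]
    apply Real.sqrt_le_sqrt
    exact Finset.single_le_sum (f := fun i => ‖z i‖ ^ 2) (fun i _ => by positivity)
      (Finset.mem_univ l)
  -- the finite target set of integer points
  set Z : Set (EuclideanSpace ℝ (Fin k)) :=
    {z | (∀ l, ∃ m : ℤ, z l = (m : ℝ)) ∧ ‖z‖ ≤ C} with hZ
  have hZfin : Z.Finite := by
    have hfin : (Set.pi Set.univ fun _ : Fin k => Set.Icc (-⌈C⌉) ⌈C⌉).Finite :=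
      Set.Finite.pi fun _ => Set.finite_Icc _ _
    apply Set.Finite.subset
      (hfin.image (fun m : Fin k → ℤ => (WithLp.toLp 2 (fun l => ((m l : ℤ) : ℝ)) : EuclideanSpace ℝ (Fin k))))
    rintro z ⟨hzint, hznorm⟩
    choose m hm using hzint
    refine ⟨m, ?_, ?_⟩
    · intro l _
      have hcl : |z l| ≤ C := le_trans (hcoord z l) hznorm
      rw [hm l] at hcl
      have h1 : |m l| ≤ ⌈C⌉ := by
        have : ((|m l| : ℤ) : ℝ) ≤ (⌈C⌉ : ℝ) := by
          rw [Int.cast_abs]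
          exact le_trans hcl (Int.le_ceil C)
        exact_mod_cast this
      rw [Set.mem_Icc]
      exact abs_le.mp h1
    · ext l
      exact (hm l).symm
  -- S i maps injectively into Z
  apply Set.Finite.of_finite_image _ hInj
  apply Set.Finite.subset hZfin
  rintro _ ⟨w, ⟨τ', hτ', rfl⟩, rfl⟩
  rw [hAW]
  set v : EuclideanSpace ℝ (Fin d) := ∑ j, (((τ' - τ) j : ℤ) : ℝ) • N j with hv
  -- unpack membership in V i
  rw [hV] at hτ'
  obtain ⟨p, ⟨x, hx, hpx⟩, hpFP⟩ := hτ'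
  rw [hFP] at hpFP
  obtain ⟨_, ⟨l, rfl⟩, y, hy, hpy⟩ := hpFP
  constructor
  · -- integer coordinates
    intro lc
    choose z hz using hint
    refine ⟨∑ j, (τ' - τ) j * z i j lc, ?_⟩
    have : (A i) v lc = ∑ j, (((τ' - τ) j : ℤ) : ℝ) * ((z i j lc : ℤ) : ℝ) := by
      rw [hv, map_sum]
      simp only [map_smul]
      rw [WithLp.ofLp_sum, Finset.sum_apply]
      congr 1
      funext j
      rw [PiLp.smul_apply, smul_eq_mul, hz]
    rw [this]
    push_cast
    rfl
  · -- norm bound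
    have hxv : x - v ∈ T τ := by
      rw [hT]
      intro m
      rw [hT] at hx
      obtain ⟨h1, h2⟩ := hx m
      rw [inner_sub_left, hv, hvn]
      have hcast : (((τ' - τ) m : ℤ) : ℝ) = (τ' m : ℝ) - (τ m : ℝ) := by
        push_cast [Pi.sub_apply]
        ring
      rw [hcast]
      constructor <;> nlinarith [hs m]
    have heq : (A i) v = (A l) y + b l - b i - (A i) (x - v) := by
      have hpx' : (A i) x + b i = p := hpx
      have hpy' : (A l) y + b l = p := hpy
      have hAx : (A i) x + b i = (A l) y + b l := hpx'.trans hpy'.symm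
      have := map_sub (A i) x v
      rw [this]
      have : (A i) x = (A l) y + b l - b i := by
        rw [← hAx]; abel
      rw [this]
      abel
    have hopi : ‖(A i) (x - v)‖ ≤ M i * R :=
      le_trans (hM i (x - v)) (mul_le_mul_of_nonneg_left (hTbound _ hxv) (hM0 i))
    have hopl : ‖(A l) y‖ ≤ M l * R :=
      le_trans (hM l y) (mul_le_mul_of_nonneg_left (hTbound _ hy) (hM0 l))
    have hsum : M l * R + ‖b l‖ ≤ ∑ l', (M l' * R + ‖b l'‖) :=
      Finset.single_le_sum (f := fun l' => M l' * R + ‖b l'‖)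
        (fun l' _ => add_nonneg (mul_nonneg (hM0 l') hR0) (norm_nonneg _))
        (Finset.mem_univ l)
    have h1 : ‖(A i) v‖ ≤ ‖(A l) y + b l - b i‖ + ‖(A i) (x - v)‖ := by
      rw [heq]; exact norm_sub_le _ _
    have h2 : ‖(A l) y + b l - b i‖ ≤ ‖(A l) y + b l‖ + ‖b i‖ := norm_sub_le _ _
    have h3 : ‖(A l) y + b l‖ ≤ ‖(A l) y‖ + ‖b l‖ := norm_add_le _ _
    rw [hC]
    linarith
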